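/- Let n ≥ 2 be an integer, 0 < r < R, let H : (r,R) → (0,∞) be continuously differentiable, let ρ : (0,∞) → [0,∞) be continuous, and define h : A(r,R) → ℝ^n by h(x) = H(|x|)·x/|x|. Then ∫_{A(r,R)} ρ(H(|x|))·‖Dh(x)‖^n dx = ω_{n−1} · ∫_r^R ρ(H(t)) · (H'(t)² + (n−1)·H(t)²/t²)^{n/2} · t^{n−1} dt, where ω_{n−1} is the surface measure of the unit sphere S^{n−1} in ℝ^n (both sides taken in [0,+∞]). -/

import Mathlib

open MeasureTheory Set
open scoped ENNReal RealInnerProductSpace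

section auxlemmas

lemma myHasFDerivAt_norm {E : Type*} [NormedAddCommGroup E] [InnerProductSpace ℝ E]
    {x : E} (hx : x ≠ 0) :
    HasFDerivAt (fun y : E => ‖y‖) (‖x‖⁻¹ • innerSL ℝ x) x := by
  have hxn : ‖x‖ ≠ 0 := norm_ne_zero_iff.2 hx
  have h2 : HasFDerivAt (fun y : E => ‖y‖ ^ 2) (2 • innerSL ℝ x) x :=
    (hasStrictFDerivAt_norm_sq x).hasFDerivAt
  have hs : HasDerivAt Real.sqrt (1 / (2 * Real.sqrt (‖x‖ ^ 2))) (‖x‖ ^ 2) :=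
    Real.hasDerivAt_sqrt (by positivity)
  have h3 := hs.comp_hasFDerivAt x h2
  have hfun : (Real.sqrt ∘ fun y : E => ‖y‖ ^ 2) = fun y : E => ‖y‖ := by
    funext y; simp [Function.comp, Real.sqrt_sq (norm_nonneg y)]
  rw [hfun] at h3
  refine h3.congr_fderiv ?_
  rw [Real.sqrt_sq (norm_nonneg x)]
  ext y
  simp [two_smul]
  field_simp
  ring

lemma mySumFderiv (n : ℕ) (H : ℝ → ℝ) (H'x : ℝ) (x : EuclideanSpace ℝ (Fin n))
    (hx : x ≠ 0) (hd : HasDerivAt H H'x ‖x‖)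
    (h : EuclideanSpace ℝ (Fin n) → EuclideanSpace ℝ (Fin n))
    (hh : ∀ y, h y = H ‖y‖ • (‖y‖⁻¹ • y)) :
    ∑ k, ‖fderiv ℝ h x (EuclideanSpace.basisFun (Fin n) ℝ k)‖ ^ 2
      = H'x ^ 2 + ((n : ℝ) - 1) * (H ‖x‖) ^ 2 / ‖x‖ ^ 2 := by
  have ht : (0:ℝ) < ‖x‖ := norm_pos_iff.2 hx
  have hN : HasFDerivAt (fun y : EuclideanSpace ℝ (Fin n) => ‖y‖) (‖x‖⁻¹ • innerSL ℝ x) x :=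
    myHasFDerivAt_norm hx
  have hG : HasDerivAt (fun s : ℝ => H s * s⁻¹) (H'x * ‖x‖⁻¹ + H ‖x‖ * -(‖x‖ ^ 2)⁻¹) ‖x‖ :=
    hd.mul (hasDerivAt_inv ht.ne')
  have hf := hG.comp_hasFDerivAt x hN
  have hsmul := hf.smul (hasFDerivAt_id x)
  have hfun : (fun y : EuclideanSpace ℝ (Fin n) =>
      ((fun s : ℝ => H s * s⁻¹) ∘ fun y : EuclideanSpace ℝ (Fin n) => ‖y‖) y • _root_.id y) = h := by
    funext y; rw [hh y, smul_smul]; rfl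
  rw [show ((fun s : ℝ => H s * s⁻¹) ∘ norm • _root_.id) = h from hfun] at hsmul
  have hfd : ∀ k : Fin n, fderiv ℝ h x (EuclideanSpace.basisFun (Fin n) ℝ k)
      = (H ‖x‖ * ‖x‖⁻¹) • (EuclideanSpace.basisFun (Fin n) ℝ k : EuclideanSpace ℝ (Fin n))
        + (((H'x * ‖x‖⁻¹ + H ‖x‖ * -(‖x‖ ^ 2)⁻¹) * ‖x‖⁻¹) * x k) • x := by
    intro k
    rw [hsmul.fderiv]
    have hinner : (innerSL ℝ x) (EuclideanSpace.basisFun (Fin n) ℝ k : EuclideanSpace ℝ (Fin n))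
        = x k := by
      simp [EuclideanSpace.basisFun_apply, EuclideanSpace.inner_single_right]
    simp only [ContinuousLinearMap.add_apply, ContinuousLinearMap.coe_smul', Pi.smul_apply,
      ContinuousLinearMap.id_apply, ContinuousLinearMap.smulRight_apply, Function.comp_apply,
      id_eq, hinner, smul_eq_mul]
    congr 1
    ring_nf
  have hterm : ∀ k : Fin n, ‖fderiv ℝ h x (EuclideanSpace.basisFun (Fin n) ℝ k)‖ ^ 2
      = (H ‖x‖ * ‖x‖⁻¹) ^ 2
        + (2 * (H ‖x‖ * ‖x‖⁻¹) * ((H'x * ‖x‖⁻¹ + H ‖x‖ * -(‖x‖ ^ 2)⁻¹) * ‖x‖⁻¹)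
            + ((H'x * ‖x‖⁻¹ + H ‖x‖ * -(‖x‖ ^ 2)⁻¹) * ‖x‖⁻¹) ^ 2 * ‖x‖ ^ 2) * (x k) ^ 2 := by
    intro k
    rw [hfd k, norm_add_sq_real]
    have h1 : ‖(H ‖x‖ * ‖x‖⁻¹) • (EuclideanSpace.basisFun (Fin n) ℝ k : EuclideanSpace ℝ (Fin n))‖ ^ 2
        = (H ‖x‖ * ‖x‖⁻¹) ^ 2 := by
      rw [norm_smul]
      simp [EuclideanSpace.basisFun_apply, Real.norm_eq_abs, mul_pow, sq_abs]
    have h2 : ⟪(H ‖x‖ * ‖x‖⁻¹) • (EuclideanSpace.basisFun (Fin n) ℝ k : EuclideanSpace ℝ (Fin n)),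
        (((H'x * ‖x‖⁻¹ + H ‖x‖ * -(‖x‖ ^ 2)⁻¹) * ‖x‖⁻¹) * x k) • x⟫
        = (H ‖x‖ * ‖x‖⁻¹) * ((((H'x * ‖x‖⁻¹ + H ‖x‖ * -(‖x‖ ^ 2)⁻¹) * ‖x‖⁻¹) * x k) * x k) := by
      rw [real_inner_smul_left, real_inner_smul_right]
      have : ⟪(EuclideanSpace.basisFun (Fin n) ℝ k : EuclideanSpace ℝ (Fin n)), x⟫ = x k := by
        simp [EuclideanSpace.basisFun_apply, EuclideanSpace.inner_single_left]
      rw [this]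
    have h3 : ‖(((H'x * ‖x‖⁻¹ + H ‖x‖ * -(‖x‖ ^ 2)⁻¹) * ‖x‖⁻¹) * x k) • x‖ ^ 2
        = ((((H'x * ‖x‖⁻¹ + H ‖x‖ * -(‖x‖ ^ 2)⁻¹) * ‖x‖⁻¹) * x k)) ^ 2 * ‖x‖ ^ 2 := by
      rw [norm_smul]
      simp [Real.norm_eq_abs, mul_pow, sq_abs]
    rw [h1, h2, h3]
    ring
  simp only [hterm]
  have hsum : ∑ k : Fin n, (x k) ^ 2 = ‖x‖ ^ 2 := by
    rw [EuclideanSpace.norm_eq x, Real.sq_sqrt (by positivity)]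
    simp [Real.norm_eq_abs, sq_abs]
  rw [Finset.sum_add_distrib, Finset.sum_const, ← Finset.mul_sum, hsum,
    Finset.card_univ, Fintype.card_fin, nsmul_eq_mul]
  have hne : ‖x‖ ≠ 0 := ht.ne'
  field_simp
  ring

open Module in
lemma myLintegralNorm {E : Type*} [NormedAddCommGroup E] [NormedSpace ℝ E]
    [Nontrivial E] [MeasurableSpace E] [BorelSpace E] [FiniteDimensional ℝ E]
    (μ : Measure E) [μ.IsAddHaarMeasure] (f : ℝ → ℝ≥0∞) (hf : Measurable f) :
    ∫⁻ x, f ‖x‖ ∂μ = μ.toSphere Set.univ *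
      ∫⁻ y in Set.Ioi (0 : ℝ), ENNReal.ofReal (y ^ (finrank ℝ E - 1)) * f y := by
  have hg : Measurable (fun y : Set.Ioi (0:ℝ) => f y) := hf.comp measurable_subtype_coe
  have h1 : ∫⁻ x, f ‖x‖ ∂μ = ∫⁻ x : ({(0 : E)}ᶜ : Set E), f ‖x.1‖ ∂(μ.comap (↑)) := by
    conv_lhs => rw [← MeasureTheory.restrict_compl_singleton (μ := μ) (0 : E)]
    exact (lintegral_subtype_comap (measurableSet_singleton _).compl (fun y : E => f ‖y‖)).symm
  have h2 := μ.measurePreserving_homeomorphUnitSphereProd.lintegral_comp_emb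
    (Homeomorph.measurableEmbedding _)
    (fun p : Metric.sphere (0 : E) 1 × Set.Ioi (0 : ℝ) => f p.2)
  simp only [homeomorphUnitSphereProd_apply_snd_coe] at h2
  have h3 : ∫⁻ p : Metric.sphere (0 : E) 1 × Set.Ioi (0 : ℝ), f p.2
      ∂(μ.toSphere.prod (Measure.volumeIoiPow (finrank ℝ E - 1)))
      = μ.toSphere Set.univ * ∫⁻ y : Set.Ioi (0 : ℝ), f y
          ∂(Measure.volumeIoiPow (finrank ℝ E - 1)) := by
    have e1 := lintegral_map (μ := μ.toSphere.prod (Measure.volumeIoiPow (finrank ℝ E - 1)))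
      hg measurable_snd
    rw [Measure.map_snd_prod, lintegral_smul_measure] at e1
    exact e1.symm
  have h4 : ∫⁻ y : Set.Ioi (0 : ℝ), f y ∂(Measure.volumeIoiPow (finrank ℝ E - 1))
      = ∫⁻ y in Set.Ioi (0 : ℝ), ENNReal.ofReal (y ^ (finrank ℝ E - 1)) * f y := by
    have hdens : Measurable (fun r : Set.Ioi (0:ℝ) => ENNReal.ofReal (r.1 ^ (finrank ℝ E - 1))) :=
      ENNReal.measurable_ofReal.comp (measurable_subtype_coe.pow_const _)
    calc ∫⁻ y : Set.Ioi (0 : ℝ), f y ∂(Measure.volumeIoiPow (finrank ℝ E - 1))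
        = ∫⁻ a : Set.Ioi (0:ℝ),
            ((fun r : Set.Ioi (0:ℝ) => ENNReal.ofReal (r.1 ^ (finrank ℝ E - 1))) *
              (fun y : Set.Ioi (0:ℝ) => f y)) a ∂(Measure.comap Subtype.val volume) :=
          lintegral_withDensity_eq_lintegral_mul _ hdens hg
      _ = ∫⁻ y in Set.Ioi (0 : ℝ), ENNReal.ofReal (y ^ (finrank ℝ E - 1)) * f y :=
          lintegral_subtype_comap measurableSet_Ioi
            (fun a : ℝ => ENNReal.ofReal (a ^ (finrank ℝ E - 1)) * f a)
  rw [h1, h2, h3, h4]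

end auxlemmas

/-- The `(ρ,n)`-energy of the radial map `h(x) = H(|x|) x/|x|` over the
annulus `A(r,R)` equals `ω_{n-1} ∫_r^R ρ(H(t)) (H'(t)² + (n-1)H(t)²/t²)^{n/2} t^{n-1} dt`,
where `ω_{n-1}` is the surface measure of the unit sphere `S^{n-1}` in `ℝⁿ`;
both sides are taken in `[0,+∞]`. -/
theorem stmt1 (n : ℕ) (hn : 2 ≤ n) (r R : ℝ) (hr : 0 < r) (hrR : r < R)
    (H H' : ℝ → ℝ)
    (hH : ∀ t ∈ Set.Ioo r R, HasDerivAt H (H' t) t)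
    (hH'cont : ContinuousOn H' (Set.Ioo r R))
    (hHpos : ∀ t ∈ Set.Ioo r R, 0 < H t)
    (ρ : ℝ → ℝ) (hρcont : ContinuousOn ρ (Set.Ioi 0)) (hρnn : ∀ s ∈ Set.Ioi (0:ℝ), 0 ≤ ρ s)
    (h : EuclideanSpace ℝ (Fin n) → EuclideanSpace ℝ (Fin n))
    (hh : ∀ x : EuclideanSpace ℝ (Fin n), h x = H ‖x‖ • (‖x‖⁻¹ • x)) :
    ∫⁻ x in {x : EuclideanSpace ℝ (Fin n) | r < ‖x‖ ∧ ‖x‖ < R},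
        ENNReal.ofReal (ρ (H ‖x‖) *
          (∑ k, ‖fderiv ℝ h x (EuclideanSpace.basisFun (Fin n) ℝ k)‖ ^ 2) ^ ((n : ℝ) / 2))
      = (volume : Measure (EuclideanSpace ℝ (Fin n))).toSphere Set.univ *
          ∫⁻ t in Set.Ioo r R,
            ENNReal.ofReal (ρ (H t) *
              (H' t ^ 2 + ((n : ℝ) - 1) * (H t) ^ 2 / t ^ 2) ^ ((n : ℝ) / 2) * t ^ (n - 1)) := by
  classical
  haveI : Nontrivial (EuclideanSpace ℝ (Fin n)) :=
    Module.nontrivial_of_finrank_pos (R := ℝ) (by rw [finrank_euclideanSpace_fin]; omega)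
  set g : ℝ → ℝ := fun t => ρ (H t) * (H' t ^ 2 + ((n : ℝ) - 1) * (H t) ^ 2 / t ^ 2) ^ ((n : ℝ) / 2)
    with hg_def
  set F : ℝ → ℝ≥0∞ := (Set.Ioo r R).indicator (fun t => ENNReal.ofReal (g t)) with hF_def
  have hHc : ContinuousOn H (Set.Ioo r R) := fun t htm =>
    (hH t htm).continuousAt.continuousWithinAt
  have hgc : ContinuousOn (fun t => ENNReal.ofReal (g t)) (Set.Ioo r R) := by
    apply Continuous.comp_continuousOn ENNReal.continuous_ofReal
    apply ContinuousOn.mul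
    · exact hρcont.comp hHc (fun t htm => Set.mem_Ioi.2 (hHpos t htm))
    · apply ContinuousOn.rpow_const
      · apply ContinuousOn.add
        · exact hH'cont.pow 2
        · apply ContinuousOn.div
          · exact continuousOn_const.mul (hHc.pow 2)
          · exact continuousOn_id.pow 2
          · intro t htm
            have : (0:ℝ) < t := lt_trans hr htm.1
            positivity
      · intro t htm
        right
        positivity
  have hFmeas : Measurable F := by
    have : F = (Set.Ioo r R).piecewise (fun t => ENNReal.ofReal (g t)) 0 := by
      rw [Set.piecewise_eq_indicator]
    rw [this]
    exact hgc.measurable_piecewise continuousOn_const measurableSet_Ioo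
  have hSmeas : MeasurableSet {x : EuclideanSpace ℝ (Fin n) | r < ‖x‖ ∧ ‖x‖ < R} := by
    have : {x : EuclideanSpace ℝ (Fin n) | r < ‖x‖ ∧ ‖x‖ < R}
        = (fun x : EuclideanSpace ℝ (Fin n) => ‖x‖) ⁻¹' (Set.Ioo r R) := rfl
    rw [this]
    exact measurable_norm measurableSet_Ioo
  have step1 : ∫⁻ x in {x : EuclideanSpace ℝ (Fin n) | r < ‖x‖ ∧ ‖x‖ < R},
      ENNReal.ofReal (ρ (H ‖x‖) *
        (∑ k, ‖fderiv ℝ h x (EuclideanSpace.basisFun (Fin n) ℝ k)‖ ^ 2) ^ ((n : ℝ) / 2))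
      = ∫⁻ x in {x : EuclideanSpace ℝ (Fin n) | r < ‖x‖ ∧ ‖x‖ < R}, F ‖x‖ := by
    apply setLIntegral_congr_fun hSmeas
    intro x hx
    beta_reduce
    have hxm : ‖x‖ ∈ Set.Ioo r R := ⟨hx.1, hx.2⟩
    have hx0 : x ≠ 0 := by
      intro h0
      rw [h0] at hxm
      simp only [norm_zero] at hxm
      linarith [hxm.1]
    rw [hF_def, Set.indicator_of_mem hxm]
    rw [mySumFderiv n H (H' ‖x‖) x hx0 (hH _ hxm) h hh]
  rw [step1]
  have step2 : ∫⁻ x in {x : EuclideanSpace ℝ (Fin n) | r < ‖x‖ ∧ ‖x‖ < R}, F ‖x‖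
      = ∫⁻ x : EuclideanSpace ℝ (Fin n), F ‖x‖ := by
    rw [← lintegral_indicator hSmeas]
    congr 1
    funext x
    by_cases hx : x ∈ {x : EuclideanSpace ℝ (Fin n) | r < ‖x‖ ∧ ‖x‖ < R}
    · rw [Set.indicator_of_mem hx]
    · rw [Set.indicator_of_notMem hx, hF_def,
        Set.indicator_of_notMem (by simpa [Set.mem_Ioo] using hx)]
  rw [step2]
  rw [myLintegralNorm volume F hFmeas]
  congr 1
  rw [finrank_euclideanSpace_fin]
  have step4 : ∫⁻ y in Set.Ioi (0:ℝ), ENNReal.ofReal (y ^ (n - 1)) * F y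
      = ∫⁻ y in Set.Ioo r R, ENNReal.ofReal (y ^ (n - 1)) * ENNReal.ofReal (g y) := by
    have hsub : Set.Ioo r R ⊆ Set.Ioi (0:ℝ) := fun y hy => lt_trans hr hy.1
    have hpt : ∀ y : ℝ, ENNReal.ofReal (y ^ (n - 1)) * F y
        = (Set.Ioo r R).indicator
            (fun y => ENNReal.ofReal (y ^ (n - 1)) * ENNReal.ofReal (g y)) y := by
      intro y
      by_cases hy : y ∈ Set.Ioo r R
      · rw [hF_def, Set.indicator_of_mem hy, Set.indicator_of_mem hy]
      · rw [hF_def, Set.indicator_of_notMem hy, Set.indicator_of_notMem hy, mul_zero]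
    simp_rw [hpt]
    rw [lintegral_indicator measurableSet_Ioo,
      Measure.restrict_restrict measurableSet_Ioo, Set.inter_eq_left.2 hsub]
  rw [step4]
  apply setLIntegral_congr_fun measurableSet_Ioo
  intro y hy
  beta_reduce
  have hy0 : (0:ℝ) < y := lt_trans hr hy.1
  rw [← ENNReal.ofReal_mul (by positivity : (0:ℝ) ≤ y ^ (n - 1))]
  rw [mul_comm]
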